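/- For every integer τ with 0 ≤ τ ≤ N − 1, the periodic cross-correlation of T^(1) and T^(2) satisfies R_{T^(1),T^(2)}(τ) = −R_{T^(1)}(τ + N/2). -/

import Mathlib

/-- The geometric sequence of the first type: `t¹ₙ = 1` iff the Legendre symbol of
`Tr(ω^n)` is `-1`, and `0` otherwise (i.e. when the symbol is `0` or `1`). -/
noncomputable def ntuT1 (p : ℕ) [Fact p.Prime] {F : Type} [Field F]
    [Algebra (ZMod p) F] (ω : F) (n : ℕ) : ZMod 2 :=
  if legendreSym p ((Algebra.trace (ZMod p) F (ω ^ n)).val : ℤ) = -1 then 1 else 0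

/-- The geometric sequence of the second type: `t²ₙ = 0` iff the Legendre symbol of
`Tr(ω^n)` is `1`, and `1` otherwise (i.e. when the symbol is `0` or `-1`). -/
noncomputable def ntuT2 (p : ℕ) [Fact p.Prime] {F : Type} [Field F]
    [Algebra (ZMod p) F] (ω : F) (n : ℕ) : ZMod 2 :=
  if legendreSym p ((Algebra.trace (ZMod p) F (ω ^ n)).val : ℤ) = 1 then 0 else 1

/-- Periodic cross-correlation at shift `τ` of two `N`-periodic binary sequences:
`R_{s,s'}(τ) = Σ_{i=0}^{N-1} (-1)^{s_i + s'_{i+τ}}`, indices taken modulo `N`. -/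
def pcorr (N : ℕ) (s s' : ℕ → ZMod 2) (τ : ℤ) : ℤ :=
  ∑ i ∈ Finset.range N, (-1 : ℤ) ^ ((s i + s' ((((i : ℤ) + τ) % (N : ℤ)).toNat)).val)

/-- The interleaved sequence of `t` and the left shift by `e` of `u`:
`n = 2j ↦ t j`, `n = 2j+1 ↦ u (j + e)`. -/
def ntuInterleave (t u : ℕ → ZMod 2) (e : ℕ) (n : ℕ) : ZMod 2 :=
  if n % 2 = 0 then t (n / 2) else u (n / 2 + e)

-- auxiliary lemmas
lemma ntu_quadChar_neg_one (p : ℕ) [Fact p.Prime] (hp : p ≠ 2) (z : ZMod p)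
    (hz : orderOf z = p - 1) : quadraticChar (ZMod p) z = -1 := by
  have hp3 : 3 ≤ p := (Fact.out : p.Prime).two_le.lt_of_ne (Ne.symm hp)
  have hodd : p % 2 = 1 := Nat.odd_iff.mp ((Fact.out : p.Prime).odd_of_ne_two hp)
  rw [quadraticChar_neg_one_iff_not_isSquare]
  rintro ⟨d, rfl⟩
  have hdd : d * d ≠ 0 := by
    intro h0
    have h1 := pow_orderOf_eq_one (d * d)
    rw [hz, h0, zero_pow (by omega : p - 1 ≠ 0)] at h1
    exact zero_ne_one h1
  have hd : d ≠ 0 := fun h => hdd (by rw [h, mul_zero])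
  have h1 : (d * d) ^ ((p - 1) / 2) = 1 := by
    rw [← pow_two, ← pow_mul, (by omega : 2 * ((p - 1) / 2) = p - 1)]
    exact ZMod.pow_card_sub_one_eq_one hd
  have h2 := orderOf_dvd_of_pow_eq_one h1
  rw [hz] at h2
  have := Nat.le_of_dvd (by omega) h2
  omega

open Polynomial in
lemma ntu_mem_base (p : ℕ) [Fact p.Prime] (F : Type) [Field F] [Algebra (ZMod p) F]
    (z : F) (hz : z ^ (p - 1) = 1) : ∃ c : ZMod p, algebraMap (ZMod p) F c = z := by
  have hp2 : 2 ≤ p := (Fact.out : p.Prime).two_le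
  have hpos : 0 < p - 1 := by omega
  classical
  have hinj : Function.Injective (algebraMap (ZMod p) F) := (algebraMap (ZMod p) F).injective
  set A : Finset F := (Finset.univ.erase (0 : ZMod p)).image (algebraMap (ZMod p) F) with hA
  have hcardA : A.card = p - 1 := by
    rw [hA, Finset.card_image_of_injective _ hinj, Finset.card_erase_of_mem (Finset.mem_univ _),
      Finset.card_univ, ZMod.card]
  have hsub : A ⊆ nthRootsFinset (p - 1) (1 : F) := by
    intro x hx
    rw [hA, Finset.mem_image] at hx
    obtain ⟨c, hc, rfl⟩ := hx
    rw [mem_nthRootsFinset hpos (1 : F), ← map_pow,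
      ZMod.pow_card_sub_one_eq_one (Finset.ne_of_mem_erase hc), map_one]
  have hcardN : (nthRootsFinset (p - 1) (1 : F)).card ≤ p - 1 := by
    rw [nthRootsFinset_def]
    exact le_trans (Multiset.toFinset_card_le _) (by simpa using card_nthRoots (p - 1) (1 : F))
  have hEq : A = nthRootsFinset (p - 1) (1 : F) :=
    Finset.eq_of_subset_of_card_le hsub (by omega)
  have hzmem : z ∈ A := by rw [hEq, mem_nthRootsFinset hpos (1 : F)]; exact hz
  rw [hA, Finset.mem_image] at hzmem
  obtain ⟨c, _, hc⟩ := hzmem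
  exact ⟨c, hc⟩

lemma ntu_legendre_eq_quadChar (p : ℕ) [Fact p.Prime] (x : ZMod p) :
    legendreSym p ((x.val : ℤ)) = quadraticChar (ZMod p) x := by
  rw [legendreSym]; norm_cast; rw [ZMod.natCast_val, ZMod.cast_id]

theorem stmt3 (p m : ℕ) [Fact p.Prime] (hp2 : p ≠ 2) (hm : 1 < m)
    (F : Type) [Field F] [Fintype F] [Algebra (ZMod p) F]
    (hcard : Fintype.card F = p ^ m) (ω : F) (hω : orderOf ω = p ^ m - 1)
    (N : ℕ) (hN : N = 2 * (p ^ m - 1) / (p - 1)) (τ : ℤ) (hτ0 : 0 ≤ τ) (hτ1 : τ ≤ (N : ℤ) - 1) :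
    pcorr N (ntuT1 p ω) (ntuT2 p ω) τ = - pcorr N (ntuT1 p ω) (ntuT1 p ω) (τ + ((N / 2 : ℕ) : ℤ)) := by
  have hp : p.Prime := Fact.out
  have hp3 : 3 ≤ p := hp.two_le.lt_of_ne (Ne.symm hp2)
  have hpm : p ^ 2 ≤ p ^ m := Nat.pow_le_pow_right (by omega) hm
  have hpp : 9 ≤ p ^ 2 := by nlinarith
  have hdvd : (p - 1) ∣ (p ^ m - 1) := by
    simpa using Nat.sub_dvd_pow_sub_pow p 1 m
  set q := (p ^ m - 1) / (p - 1) with hqdef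
  have hq : q * (p - 1) = p ^ m - 1 := Nat.div_mul_cancel hdvd
  have hq0 : 0 < q := by
    rcases Nat.eq_zero_or_pos q with h | h
    · rw [h, zero_mul] at hq; omega
    · exact h
  have hNq : N = 2 * q := by rw [hN, Nat.mul_div_assoc 2 hdvd]
  have hN2 : N / 2 = q := by omega
  have hN0 : 0 < N := by omega
  -- the element z = ω^q lies in the base field, with order p - 1
  have hzord : orderOf (ω ^ q) = p - 1 := by
    rw [orderOf_pow' ω (by omega), hω, Nat.gcd_eq_right ⟨p - 1, hq.symm⟩, ← hq,
      Nat.mul_div_cancel_left _ hq0]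
  have hz1 : (ω ^ q) ^ (p - 1) = 1 := by rw [← hzord]; exact pow_orderOf_eq_one _
  obtain ⟨c, hc⟩ := ntu_mem_base p F (ω ^ q) hz1
  have hcord : orderOf c = p - 1 := by
    rw [← orderOf_injective (algebraMap (ZMod p) F).toMonoidHom
      (algebraMap (ZMod p) F).injective c]
    exact hc ▸ hzord
  have hχc : quadraticChar (ZMod p) c = -1 := ntu_quadChar_neg_one p hp2 c hcord
  -- key : shifting by q flips the character
  have key : ∀ n : ℕ, quadraticChar (ZMod p) (Algebra.trace (ZMod p) F (ω ^ (n + q)))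
      = - quadraticChar (ZMod p) (Algebra.trace (ZMod p) F (ω ^ n)) := by
    intro n
    have h1 : ω ^ (n + q) = algebraMap (ZMod p) F c * ω ^ n := by rw [hc, pow_add, mul_comm]
    rw [h1, ← Algebra.smul_def, map_smul, smul_eq_mul, map_mul, hχc, neg_one_mul]
  -- ntuT2 n = 1 + ntuT1 (n + q)
  have hT : ∀ n : ℕ, ntuT2 p ω n = 1 + ntuT1 p ω (n + q) := by
    intro n
    rw [ntuT1, ntuT2, ntu_legendre_eq_quadChar, ntu_legendre_eq_quadChar, key n]
    by_cases h : quadraticChar (ZMod p) (Algebra.trace (ZMod p) F (ω ^ n)) = 1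
    · rw [if_pos h, if_pos (by rw [h])]; decide
    · rw [if_neg h, if_neg (by simpa using h)]; decide
  -- periodicity of ntuT1
  have hper : Function.Periodic (ntuT1 p ω) N := by
    intro n
    rw [ntuT1, ntuT1, ntu_legendre_eq_quadChar, ntu_legendre_eq_quadChar,
      (by omega : n + N = n + q + q), key (n + q), key n, neg_neg]
  -- index arithmetic
  have hidx : ∀ i : ℕ, ((((i : ℤ) + τ) % (N : ℤ)).toNat + q) % N
      = (((i : ℤ) + (τ + ((N / 2 : ℕ) : ℤ))) % (N : ℤ)).toNat := by
    intro i
    have hNne : (N : ℤ) ≠ 0 := by exact_mod_cast hN0.ne'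
    have h1 : (0 : ℤ) ≤ ((i : ℤ) + τ) % (N : ℤ) := Int.emod_nonneg _ hNne
    have h2 : (0 : ℤ) ≤ ((i : ℤ) + (τ + ((N / 2 : ℕ) : ℤ))) % (N : ℤ) := Int.emod_nonneg _ hNne
    apply Nat.cast_injective (R := ℤ)
    push_cast [Int.toNat_of_nonneg h1, Int.toNat_of_nonneg h2, hN2]
    conv_rhs => rw [← add_assoc, ← Int.emod_add_emod]
    rw [Int.toNat_of_nonneg (Int.emod_nonneg _ hNne)]
  -- the sum
  rw [pcorr, pcorr, ← Finset.sum_neg_distrib]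
  apply Finset.sum_congr rfl
  intro i _
  have hrw : ntuT1 p ω ((((i : ℤ) + τ) % (N : ℤ)).toNat + q)
      = ntuT1 p ω ((((i : ℤ) + (τ + ((N / 2 : ℕ) : ℤ))) % (N : ℤ)).toNat) :=
    (hper.map_mod_nat _).symm.trans (congrArg (ntuT1 p ω) (hidx i))
  rw [hT, hrw]
  set x := ntuT1 p ω i with hx
  set y := ntuT1 p ω ((((i : ℤ) + (τ + ((N / 2 : ℕ) : ℤ))) % (N : ℤ)).toNat) with hy
  have : x + (1 + y) = 1 + (x + y) := by ring
  rw [this]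
  generalize x + y = w
  fin_cases w <;> decide
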